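/- Let n ≥ 1 and R > 0, and let v, w : Fin n → ℝ² be point lists with all points contained in the closed ball of radius R centered at the origin. Set δ = max_{0 ≤ i ≤ n−1} ‖v_i − w_i‖. Then the Lebesgue measure of the symmetric difference of the convex hulls satisfies vol( conv{v_0, …, v_{n−1}} Δ conv{w_0, …, w_{n−1}} ) ≤ 2 n² R (2 + π) δ. In particular, the map v ↦ χ_{conv{v_i}} is Lipschitz from (ℝ²)^n (with the max norm) into L¹(ℝ²) on tuples contained in the ball of radius R. -/

import Mathlib

open MeasureTheory Set Pointwise

local notation "E2" => EuclideanSpace ℝ (Fin 2)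

lemma coord_le_norm (x : E2) (i : Fin 2) : |x i| ≤ ‖x‖ := by
  rw [EuclideanSpace.norm_eq]
  rw [show |x i| = Real.sqrt (|x i| ^ 2) by rw [Real.sqrt_sq_eq_abs, abs_abs]]
  apply Real.sqrt_le_sqrt
  rw [sq_abs]
  have := Finset.single_le_sum (f := fun j => ‖x j‖ ^ 2) (fun j _ => by positivity)
    (Finset.mem_univ i)
  simpa using this

lemma hull_subset_add {ι : Type*} (a a' : ι → E2) {S : Set E2} (hS : Convex ℝ S)
    (hd : ∀ i, a i - a' i ∈ S) :
    convexHull ℝ (Set.range a) ⊆ convexHull ℝ (Set.range a') + S := by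
  apply convexHull_min _ ((convex_convexHull ℝ _).add hS)
  rintro x ⟨i, rfl⟩
  have : a i = a' i + (a i - a' i) := by abel
  rw [this]
  exact Set.add_mem_add (subset_convexHull ℝ _ ⟨i, rfl⟩) (hd i)

lemma vol_add_segment_diff {R : ℝ} (hR : 0 < R) (K : Set E2)
    (hKcomp : IsCompact K) (hKconv : Convex ℝ K)
    (hKR : K ⊆ Metric.closedBall 0 R) (u : E2) :
    volume ((K + segment ℝ 0 u) \ K) ≤ ENNReal.ofReal (2 * R * ‖u‖) := by
  rcases eq_or_ne u 0 with rfl | hu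
  · rw [segment_same, Set.add_singleton]
    simp
  set c : ℝ := ‖u‖ with hc
  have hc0 : 0 < c := norm_pos_iff.mpr hu
  have hfin : Module.finrank ℝ E2 = Fintype.card (Fin 2) := by simp
  have horth : Orthonormal ℝ (Set.restrict ({1} : Set (Fin 2)) (fun _ => c⁻¹ • u)) := by
    rw [orthonormal_iff_ite]
    have hnorm : ‖c⁻¹ • u‖ = 1 := by
      rw [norm_smul, Real.norm_eq_abs, abs_of_pos (inv_pos.mpr hc0), inv_mul_cancel₀ hc0.ne']
    rintro ⟨i, hi⟩ ⟨j, hj⟩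
    have hij : (⟨i, hi⟩ : ({1} : Set (Fin 2))) = ⟨j, hj⟩ :=
      Subtype.ext ((Set.mem_singleton_iff.mp hi).trans (Set.mem_singleton_iff.mp hj).symm)
    rw [if_pos hij, hij]
    show (inner ℝ (c⁻¹ • u) (c⁻¹ • u) : ℝ) = 1
    rw [real_inner_self_eq_norm_sq, hnorm]
    norm_num
  obtain ⟨b, hb⟩ := horth.exists_orthonormalBasis_extension_of_card_eq hfin
  have hb1 : b 1 = c⁻¹ • u := hb 1 rfl
  -- the measurable equiv to ℝ × ℝ
  set Te : E2 ≃ᵐ ℝ × ℝ :=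
    (b.repr.toHomeomorph.toMeasurableEquiv).trans
      (((MeasurableEquiv.toLp 2 (Fin 2 → ℝ)).symm).trans MeasurableEquiv.finTwoArrow) with hTe
  have hTeapp : ∀ x : E2, Te x = (b.repr x 0, b.repr x 1) := fun x => rfl
  have hTmp : MeasurePreserving Te := by
    have h1 := b.repr.measurePreserving
    have h2 := EuclideanSpace.volume_preserving_symm_measurableEquiv_toLp (Fin 2)
    have h3 := measurePreserving_finTwoArrow (volume : Measure ℝ)
    exact (h3.comp h2).comp h1
  have hTinj : Function.Injective Te := Te.injective
  have hTadd : ∀ x y : E2, Te (x + y) = Te x + Te y := by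
    intro x y; simp [hTeapp, Prod.ext_iff]
  have hTsmul : ∀ (t : ℝ) (x : E2), Te (t • x) = t • Te x := by
    intro t x; simp [hTeapp, Prod.ext_iff]
  have hTu : Te u = ((0 : ℝ), c) := by
    have hu' : u = c • b 1 := by
      rw [hb1, smul_smul]
      field_simp
      rw [one_smul]
    rw [hu', hTsmul]
    have h0 : b.repr (b 1) = EuclideanSpace.single 1 (1 : ℝ) := b.repr_self 1
    simp [hTeapp, h0, Prod.ext_iff, EuclideanSpace.single_apply]
  set S2 : Set (ℝ × ℝ) := {(0 : ℝ)} ×ˢ Icc (0 : ℝ) c with hS2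
  have hTseg : Te '' segment ℝ 0 u ⊆ S2 := by
    rintro _ ⟨x, hx, rfl⟩
    rw [segment_eq_image'] at hx
    obtain ⟨t, ht, rfl⟩ := hx
    simp only [zero_add, sub_zero]
    rw [hTsmul, hTu]
    refine ⟨by simp, ?_⟩
    simp only [Prod.smul_snd, smul_eq_mul, Set.mem_Icc]
    exact ⟨mul_nonneg ht.1 hc0.le, by nlinarith [ht.1, ht.2, hc0.le]⟩
  set K2 : Set (ℝ × ℝ) := Te '' K with hK2
  have hTcont : Continuous Te := by
    have h : ⇑Te = fun x : E2 => ((b.repr x) 0, (b.repr x) 1) := rfl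
    rw [h]
    exact (continuous_apply (0 : Fin 2)).comp ((PiLp.continuous_ofLp 2 _).comp b.repr.continuous) |>.prodMk
      ((continuous_apply (1 : Fin 2)).comp ((PiLp.continuous_ofLp 2 _).comp b.repr.continuous))
  have hK2comp : IsCompact K2 := hKcomp.image hTcont
  have hK2conv : Convex ℝ K2 := by
    rintro _ ⟨x, hx, rfl⟩ _ ⟨y, hy, rfl⟩ s t hs ht hst
    exact ⟨s • x + t • y, hKconv hx hy hs ht hst, by rw [hTadd, hTsmul, hTsmul]⟩
  have hK2R : ∀ p ∈ K2, |p.1| ≤ R ∧ |p.2| ≤ R := by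
    rintro _ ⟨x, hx, rfl⟩
    have hxR : ‖x‖ ≤ R := by simpa [Metric.mem_closedBall, dist_eq_norm] using hKR hx
    have h1 : ‖b.repr x‖ = ‖x‖ := b.repr.norm_map x
    rw [hTeapp]
    exact ⟨(coord_le_norm (b.repr x) 0).trans (h1.le.trans hxR),
      (coord_le_norm (b.repr x) 1).trans (h1.le.trans hxR)⟩
  -- transfer measure
  have hseg_comp : IsCompact (segment ℝ 0 u) := by
    rw [segment_eq_image']
    exact isCompact_Icc.image (by fun_prop)
  have hAmeas : MeasurableSet ((K + segment ℝ 0 u) \ K) :=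
    ((hKcomp.add hseg_comp).isClosed.measurableSet).diff hKcomp.isClosed.measurableSet
  have himgadd : Te '' (K + segment ℝ 0 u) = K2 + Te '' segment ℝ 0 u := by
    ext p
    constructor
    · rintro ⟨_, ⟨a, ha, s, hs, rfl⟩, rfl⟩
      exact ⟨Te a, ⟨a, ha, rfl⟩, Te s, ⟨s, hs, rfl⟩, (hTadd a s).symm⟩
    · rintro ⟨_, ⟨a, ha, rfl⟩, _, ⟨s, hs, rfl⟩, rfl⟩
      exact ⟨a + s, ⟨a, ha, s, hs, rfl⟩, hTadd a s⟩
  have hvol : volume ((K + segment ℝ 0 u) \ K)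
      = volume (Te '' ((K + segment ℝ 0 u) \ K)) := by
    rw [Te.image_eq_preimage_symm]
    exact ((MeasurePreserving.symm Te hTmp).measure_preimage hAmeas.nullMeasurableSet).symm
  rw [hvol, Set.image_diff hTinj, himgadd]
  have hsub : (K2 + Te '' segment ℝ 0 u) \ K2 ⊆ (K2 + S2) \ K2 :=
    Set.diff_subset_diff_left (Set.add_subset_add_left hTseg)
  refine le_trans (measure_mono hsub) ?_
  -- Fubini on the planar set
  have hS2comp : IsCompact S2 := isCompact_singleton.prod isCompact_Icc
  have hA2meas : MeasurableSet ((K2 + S2) \ K2) :=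
    ((hK2comp.add hS2comp).isClosed.measurableSet).diff hK2comp.isClosed.measurableSet
  rw [Measure.volume_eq_prod, Measure.prod_apply hA2meas]
  have hbound : ∀ x : ℝ, volume (Prod.mk x ⁻¹' ((K2 + S2) \ K2))
      ≤ Set.indicator (Icc (-R) R) (fun _ => ENNReal.ofReal c) x := by
    intro x
    by_cases hx : x ∈ Icc (-R) R
    · rw [Set.indicator_of_mem hx]
      set I : Set ℝ := {y | (x, y) ∈ K2} with hI
      have hpre : Prod.mk x ⁻¹' ((K2 + S2) \ K2) = (I + Icc 0 c) \ I := by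
        have hslice : Prod.mk x ⁻¹' (K2 + S2) = I + Icc 0 c := by
          ext y
          constructor
          · rintro ⟨p, hp, q, hq, hpq⟩
            obtain ⟨hq1, hq2⟩ := hq
            simp only [Set.mem_singleton_iff] at hq1
            have hp1 : p.1 = x := by
              have := congrArg Prod.fst hpq
              simpa [hq1] using this
            have hp2 : p.2 + q.2 = y := congrArg Prod.snd hpq
            refine ⟨p.2, ?_, q.2, hq2, hp2⟩
            show (x, p.2) ∈ K2
            rw [← hp1]
            exact hp
          · rintro ⟨a, ha, s, hs, rfl⟩
            exact ⟨(x, a), ha, (0, s), ⟨rfl, hs⟩, by simp⟩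
        ext y
        simp only [Set.mem_preimage, Set.mem_diff]
        rw [show ((x, y) ∈ K2 + S2) ↔ y ∈ Prod.mk x ⁻¹' (K2 + S2) from Iff.rfl, hslice]
        exact Iff.rfl
      rw [hpre]
      rcases Set.eq_empty_or_nonempty I with hIe | hIne
      · rw [hIe]
        simp
      · have hIclosed : IsClosed I := by
          have : I = Prod.mk x ⁻¹' K2 := rfl
          rw [this]
          exact hK2comp.isClosed.preimage (by fun_prop)
        have hIsub : I ⊆ Icc (-R) R := by
          intro y hy
          have := (hK2R (x, y) hy).2
          exact Set.mem_Icc.mpr (abs_le.mp this)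
        have hIcomp : IsCompact I := isCompact_Icc.of_isClosed_subset hIclosed hIsub
        have hIconv : Convex ℝ I := by
          intro y1 hy1 y2 hy2 s t hs ht hst
          have hmem := hK2conv hy1 hy2 hs ht hst
          have h2 : s • ((x : ℝ), y1) + t • ((x : ℝ), y2) = ((x : ℝ), s • y1 + t • y2) := by
            have hx' : s * x + t * x = x := by rw [← add_mul, hst, one_mul]
            simp [Prod.ext_iff, smul_eq_mul, hx']
          show ((x : ℝ), s • y1 + t • y2) ∈ K2
          rwa [h2] at hmem
        have hIcc : I = Icc (sInf I) (sSup I) :=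
          eq_Icc_of_connected_compact ⟨hIne, hIconv.isPreconnected⟩ hIcomp
        set a := sInf I
        set bb := sSup I
        have hab : a ≤ bb := by
          obtain ⟨y0, hy0⟩ := hIne
          rw [hIcc] at hy0
          exact le_trans hy0.1 hy0.2
        rw [hIcc, Set.Icc_add_Icc hab hc0.le, add_zero]
        have hsubI : Icc a bb ⊆ Icc a (bb + c) := Set.Icc_subset_Icc le_rfl (by linarith)
        rw [measure_diff hsubI measurableSet_Icc.nullMeasurableSet
          (by rw [Real.volume_Icc]; exact ENNReal.ofReal_ne_top)]
        rw [Real.volume_Icc, Real.volume_Icc]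
        rw [tsub_le_iff_right, ← ENNReal.ofReal_add hc0.le (by linarith)]
        exact ENNReal.ofReal_le_ofReal (by linarith)
    · rw [Set.indicator_of_notMem hx]
      have hempty : Prod.mk x ⁻¹' ((K2 + S2) \ K2) = ∅ := by
        ext y
        simp only [Set.mem_preimage, Set.mem_diff, Set.mem_empty_iff_false, iff_false]
        rintro ⟨⟨p, hp, q, hq, hpq⟩, -⟩
        have hq1 : q.1 = 0 := hq.1
        have hp1 : p.1 = x := by
          have := congrArg Prod.fst hpq
          simpa [hq1] using this
        apply hx
        rw [← hp1]
        exact Set.mem_Icc.mpr (abs_le.mp (hK2R p hp).1)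
      rw [hempty]
      simp
  refine le_trans (lintegral_mono hbound) ?_
  rw [lintegral_indicator measurableSet_Icc, setLIntegral_const, Real.volume_Icc,
    ← ENNReal.ofReal_mul hc0.le]
  exact ENNReal.ofReal_le_ofReal (le_of_eq (by ring))

theorem stmt13 (n : ℕ) (hn : 1 ≤ n) (R : ℝ) (hR : 0 < R)
    (v w : Fin n → EuclideanSpace ℝ (Fin 2))
    (hv : ∀ i, v i ∈ Metric.closedBall (0 : EuclideanSpace ℝ (Fin 2)) R)
    (hw : ∀ i, w i ∈ Metric.closedBall (0 : EuclideanSpace ℝ (Fin 2)) R) :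
    volume (symmDiff (convexHull ℝ (Set.range v)) (convexHull ℝ (Set.range w))) ≤
      ENNReal.ofReal (2 * n ^ 2 * R * (2 + Real.pi) * ⨆ i : Fin n, ‖v i - w i‖) := by
  set δ : ℝ := ⨆ i : Fin n, ‖v i - w i‖ with hδ
  have hδi : ∀ i, ‖v i - w i‖ ≤ δ := fun i =>
    le_ciSup (f := fun i : Fin n => ‖v i - w i‖) (Set.Finite.bddAbove (Set.finite_range _)) i
  have hδ0 : 0 ≤ δ := le_trans (norm_nonneg _) (hδi ⟨0, hn⟩)
  set seq : ℕ → Fin n → E2 := fun k i => if (i : ℕ) < k then w i else v i with hseq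
  set C : ℕ → Set E2 := fun k => convexHull ℝ (Set.range (seq k)) with hC
  have hC0 : C 0 = convexHull ℝ (Set.range v) := by
    have h : seq 0 = v := funext fun i => if_neg (Nat.not_lt_zero _)
    show convexHull ℝ (Set.range _) = _
    rw [h]
  have hCn : C n = convexHull ℝ (Set.range w) := by
    have h : seq n = w := funext fun i => if_pos i.isLt
    show convexHull ℝ (Set.range _) = _
    rw [h]
  have hCcomp : ∀ k, IsCompact (C k) := fun k => (Set.finite_range _).isCompact_convexHull ℝ
  have hCconv : ∀ k, Convex ℝ (C k) := fun k => convex_convexHull ℝ _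
  have hCR : ∀ k, C k ⊆ Metric.closedBall 0 R := by
    intro k
    apply convexHull_min _ (convex_closedBall _ _)
    rintro x ⟨i, rfl⟩
    by_cases h : (i : ℕ) < k
    · simpa [hseq, h] using hw i
    · simpa [hseq, h] using hv i
  have hstep : ∀ k, k < n → volume (symmDiff (C k) (C (k + 1))) ≤
      ENNReal.ofReal (4 * R * δ) := by
    intro k hk
    set d : E2 := v ⟨k, hk⟩ - w ⟨k, hk⟩ with hd
    have hdmem : ∀ i, seq k i - seq (k + 1) i ∈ segment ℝ 0 d := by
      intro i
      rcases lt_trichotomy (i : ℕ) k with h | h | h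
      · simp only [hseq]
        rw [if_pos h, if_pos (by omega)]
        simpa using left_mem_segment ℝ (0 : E2) d
      · have hi : i = ⟨k, hk⟩ := Fin.ext h
        simp only [hseq]
        rw [if_neg (by omega), if_pos (by omega), hi]
        exact right_mem_segment ℝ 0 d
      · simp only [hseq]
        rw [if_neg (by omega), if_neg (by omega)]
        simpa using left_mem_segment ℝ (0 : E2) d
    have hdmem' : ∀ i, seq (k + 1) i - seq k i ∈ segment ℝ 0 (-d) := by
      intro i
      rcases lt_trichotomy (i : ℕ) k with h | h | h
      · simp only [hseq]
        rw [if_pos h, if_pos (by omega)]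
        simpa using left_mem_segment ℝ (0 : E2) (-d)
      · have hi : i = ⟨k, hk⟩ := Fin.ext h
        simp only [hseq]
        rw [if_pos (show (i : ℕ) < k + 1 by omega), if_neg (show ¬((i : ℕ) < k) by omega), hi]
        have : w (⟨k, hk⟩ : Fin n) - v ⟨k, hk⟩ = -d := by rw [hd]; abel
        rw [this]
        exact right_mem_segment ℝ 0 (-d)
      · simp only [hseq]
        rw [if_neg (by omega), if_neg (by omega)]
        simpa using left_mem_segment ℝ (0 : E2) (-d)
    have h1 : C k \ C (k + 1) ⊆ (C (k + 1) + segment ℝ 0 d) \ C (k + 1) :=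
      Set.diff_subset_diff_left (hull_subset_add _ _ (convex_segment _ _) hdmem)
    have h2 : C (k + 1) \ C k ⊆ (C k + segment ℝ 0 (-d)) \ C k :=
      Set.diff_subset_diff_left (hull_subset_add _ _ (convex_segment _ _) hdmem')
    have hb1 : volume (C k \ C (k + 1)) ≤ ENNReal.ofReal (2 * R * δ) := by
      refine le_trans (measure_mono h1) (le_trans
        (vol_add_segment_diff hR _ (hCcomp _) (hCconv _) (hCR _) d) ?_)
      exact ENNReal.ofReal_le_ofReal (by nlinarith [hδi ⟨k, hk⟩, norm_nonneg d, hR.le])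
    have hb2 : volume (C (k + 1) \ C k) ≤ ENNReal.ofReal (2 * R * δ) := by
      refine le_trans (measure_mono h2) (le_trans
        (vol_add_segment_diff hR _ (hCcomp _) (hCconv _) (hCR _) (-d)) ?_)
      rw [norm_neg]
      exact ENNReal.ofReal_le_ofReal (by nlinarith [hδi ⟨k, hk⟩, norm_nonneg d, hR.le])
    calc volume (symmDiff (C k) (C (k + 1)))
        ≤ volume (C k \ C (k + 1)) + volume (C (k + 1) \ C k) := by
          rw [Set.symmDiff_def]
          exact measure_union_le _ _
      _ ≤ ENNReal.ofReal (2 * R * δ) + ENNReal.ofReal (2 * R * δ) := add_le_add hb1 hb2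
      _ = ENNReal.ofReal (4 * R * δ) := by
          rw [← ENNReal.ofReal_add (by positivity) (by positivity)]
          ring_nf
  have htel : ∀ m, m ≤ n → volume (symmDiff (C 0) (C m)) ≤
      (m : ENNReal) * ENNReal.ofReal (4 * R * δ) := by
    intro m
    induction m with
    | zero =>
      intro _
      simp [symmDiff_self]
    | succ m ih =>
      intro hm
      have hm' : m < n := hm
      calc volume (symmDiff (C 0) (C (m + 1)))
          ≤ volume (symmDiff (C 0) (C m) ∪ symmDiff (C m) (C (m + 1))) :=
            measure_mono (symmDiff_triangle _ _ _)
        _ ≤ volume (symmDiff (C 0) (C m)) + volume (symmDiff (C m) (C (m + 1))) :=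
            measure_union_le _ _
        _ ≤ (m : ENNReal) * ENNReal.ofReal (4 * R * δ) + ENNReal.ofReal (4 * R * δ) :=
            add_le_add (ih hm'.le) (hstep m hm')
        _ = ((m + 1 : ℕ) : ENNReal) * ENNReal.ofReal (4 * R * δ) := by
            push_cast
            rw [add_mul, one_mul]
  have hfin := htel n le_rfl
  rw [hC0, hCn] at hfin
  refine hfin.trans ?_
  rw [show ((n : ℕ) : ENNReal) = ENNReal.ofReal (n : ℝ) by simp,
    ← ENNReal.ofReal_mul (by positivity)]
  apply ENNReal.ofReal_le_ofReal
  have hn' : (1 : ℝ) ≤ (n : ℝ) := by exact_mod_cast hn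
  have key : (2 : ℝ) ≤ (n : ℝ) * (2 + Real.pi) := by nlinarith [Real.pi_pos]
  nlinarith [mul_nonneg (mul_nonneg hR.le hδ0) (mul_nonneg (sub_nonneg.mpr key)
    (by positivity : (0:ℝ) ≤ (n:ℝ)))]
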